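/- Let G be a compactly generated LCA group with tile B and lattice L, and X = C^{1,∞}(G;ℝ) the mixed norm space. Then the space C_c(G;ℝ) of compactly supported continuous real functions is dense in X with respect to the norm ‖f‖_X = ∑_{ℓ∈L} ‖f|_{B+ℓ}‖_∞. -/

import Mathlib

open MeasureTheory

/-- The sup of `|f|` over the translated tile `B + ℓ`. -/
noncomputable def cellSup {G : Type*} [Add G] (B : Set G) (ℓ : G) (f : G → ℝ) : ℝ :=
  sSup ((fun x => |f x|) '' ((fun b => b + ℓ) '' B))

/-- Membership in the mixed-norm space `X = C^{1,∞}(G;ℝ)` associated with the lattice `L`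
and the tile `B`: `f` is continuous and `∑_{ℓ∈L} ‖f|_{B+ℓ}‖_∞ < ∞`. -/
def MemX {G : Type*} [AddCommGroup G] [TopologicalSpace G]
    (L : AddSubgroup G) (B : Set G) (f : G → ℝ) : Prop :=
  Continuous f ∧
    (∀ ℓ : L, BddAbove ((fun x => |f x|) '' ((fun b => b + (ℓ : G)) '' B))) ∧
    Summable (fun ℓ : L => cellSup B (ℓ : G) f)

/-- The mixed norm `‖f‖_X = ∑_{ℓ∈L} ‖f|_{B+ℓ}‖_∞`. -/
noncomputable def normX {G : Type*} [AddCommGroup G] [TopologicalSpace G]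
    (L : AddSubgroup G) (B : Set G) (f : G → ℝ) : ℝ :=
  ∑' ℓ : L, cellSup B (ℓ : G) f

lemma cellSup_nonneg' {G : Type*} [Add G] (B : Set G) (ℓ : G) (f : G → ℝ) :
    0 ≤ cellSup B ℓ f :=
  Real.sSup_nonneg (by rintro x ⟨y, -, rfl⟩; exact abs_nonneg _)

lemma cellSup_mono' {G : Type*} [Add G] (B : Set G) (ℓ : G) {f g : G → ℝ}
    (hb : BddAbove ((fun x => |f x|) '' ((fun b => b + ℓ) '' B)))
    (h : ∀ x, |g x| ≤ |f x|) :
    cellSup B ℓ g ≤ cellSup B ℓ f := by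
  apply Real.sSup_le _ (cellSup_nonneg' B ℓ f)
  rintro y ⟨x, hx, rfl⟩
  exact (h x).trans (le_csSup hb ⟨x, hx, rfl⟩)

lemma bddAbove_of_le {G : Type*} [Add G] (B : Set G) (ℓ : G) {f g : G → ℝ}
    (hb : BddAbove ((fun x => |f x|) '' ((fun b => b + ℓ) '' B)))
    (h : ∀ x, |g x| ≤ |f x|) :
    BddAbove ((fun x => |g x|) '' ((fun b => b + ℓ) '' B)) := by
  refine ⟨cellSup B ℓ f, ?_⟩
  rintro y ⟨x, hx, rfl⟩
  exact (h x).trans (le_csSup hb ⟨x, hx, rfl⟩)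

lemma cellSup_eq_zero_of {G : Type*} [Add G] (B : Set G) (ℓ : G) {g : G → ℝ}
    (h : ∀ x ∈ (fun b => b + ℓ) '' B, g x = 0) :
    cellSup B ℓ g = 0 := by
  refine le_antisymm (Real.sSup_le ?_ le_rfl) (cellSup_nonneg' B ℓ g)
  rintro y ⟨x, hx, rfl⟩
  simp [h x hx]

/-- `C_c(G;ℝ)` is dense in the mixed-norm space `X = C^{1,∞}(G;ℝ)`. -/
theorem compactly_supported_dense {G : Type*} [AddCommGroup G] [TopologicalSpace G]
    [IsTopologicalAddGroup G] [LocallyCompactSpace G] [T2Space G]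
    [MeasurableSpace G] [BorelSpace G]
    (L : AddSubgroup G) (hLd : DiscreteTopology ↥L) (hLq : CompactSpace (G ⧸ L))
    (B : Set G) (hBm : MeasurableSet B) (hBc : IsCompact (closure B))
    (htile : ∀ g : G, ∃! p : ↥L × ↥B, (p.1 : G) + (p.2 : G) = g) :
    ∀ f : G → ℝ, MemX L B f → ∀ ε : ℝ, 0 < ε →
      ∃ g : G → ℝ, Continuous g ∧ HasCompactSupport g ∧ MemX L B g ∧
        MemX L B (fun x => f x - g x) ∧ normX L B (fun x => f x - g x) < ε := by
  rintro f ⟨hfc, hfb, hfs⟩ ε hε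
  -- choose a finite set of lattice points with small tail
  obtain ⟨F, hF⟩ : ∃ F : Finset L,
      ∑' ℓ : {x : L // x ∉ F}, cellSup B (ℓ : G) f < ε := by
    have := (tendsto_tsum_compl_atTop_zero (fun ℓ : L => cellSup B (ℓ : G) f)).eventually
      (gt_mem_nhds hε)
    exact this.exists
  -- the compact set covering the cells indexed by F
  set K : Set G := ⋃ ℓ ∈ F, (fun b => b + (ℓ : G)) '' closure B with hK
  have hKc : IsCompact K := F.isCompact_biUnion fun ℓ _ =>
    hBc.image (continuous_id.add continuous_const)
  -- the cutoff function
  obtain ⟨φ, hφ1, -, hφcs, hφ01⟩ :=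
    exists_continuous_one_zero_of_isCompact hKc isClosed_empty (Set.disjoint_empty _)
  set g : G → ℝ := fun x => φ x * f x with hg
  have hgc : Continuous g := φ.continuous.mul hfc
  have hgcs : HasCompactSupport g := hφcs.mul_right
  have hφ_le : ∀ x, |φ x| ≤ 1 := fun x => abs_le.2 ⟨by linarith [(hφ01 x).1], (hφ01 x).2⟩
  have hgle : ∀ x, |g x| ≤ |f x| := by
    intro x
    rw [hg, abs_mul]
    calc |φ x| * |f x| ≤ 1 * |f x| := by
          exact mul_le_mul_of_nonneg_right (hφ_le x) (abs_nonneg _)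
      _ = |f x| := one_mul _
  have hdle : ∀ x, |f x - g x| ≤ |f x| := by
    intro x
    rw [hg]
    have : f x - φ x * f x = (1 - φ x) * f x := by ring
    rw [this, abs_mul]
    have h1 : |1 - φ x| ≤ 1 := abs_le.2 ⟨by linarith [(hφ01 x).2], by linarith [(hφ01 x).1]⟩
    calc |1 - φ x| * |f x| ≤ 1 * |f x| :=
          mul_le_mul_of_nonneg_right h1 (abs_nonneg _)
      _ = |f x| := one_mul _
  -- the difference vanishes on cells indexed by F
  have hzero : ∀ ℓ : L, ℓ ∈ F → cellSup B (ℓ : G) (fun x => f x - g x) = 0 := by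
    intro ℓ hℓ
    apply cellSup_eq_zero_of
    rintro x ⟨b, hb, rfl⟩
    have hxK : (b + (ℓ : G)) ∈ K := by
      refine Set.mem_biUnion hℓ ⟨b, subset_closure hb, rfl⟩
    have : φ (b + (ℓ : G)) = 1 := hφ1 hxK
    simp [hg, this]
  refine ⟨g, hgc, hgcs, ⟨hgc, fun ℓ => bddAbove_of_le B _ (hfb ℓ) hgle,
      Summable.of_nonneg_of_le (fun ℓ => cellSup_nonneg' B _ g)
        (fun ℓ => cellSup_mono' B _ (hfb ℓ) hgle) hfs⟩,
    ⟨hfc.sub hgc, fun ℓ => bddAbove_of_le B _ (hfb ℓ) hdle,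
      Summable.of_nonneg_of_le (fun ℓ => cellSup_nonneg' B _ _)
        (fun ℓ => cellSup_mono' B _ (hfb ℓ) hdle) hfs⟩, ?_⟩
  -- estimate the norm of the difference
  have hsum_d : Summable (fun ℓ : L => cellSup B (ℓ : G) (fun x => f x - g x)) :=
    Summable.of_nonneg_of_le (fun ℓ => cellSup_nonneg' B _ _)
      (fun ℓ => cellSup_mono' B _ (hfb ℓ) hdle) hfs
  have hsupp : Function.support (fun ℓ : L => cellSup B (ℓ : G) (fun x => f x - g x))
      ⊆ {x : L | x ∉ F} := by
    intro ℓ hℓ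
    simp only [Set.mem_setOf_eq]
    intro hmem
    exact hℓ (hzero ℓ hmem)
  calc normX L B (fun x => f x - g x)
      = ∑' ℓ : {x : L // x ∉ F}, cellSup B (ℓ : G) (fun x => f x - g x) :=
        (tsum_subtype_eq_of_support_subset hsupp).symm
    _ ≤ ∑' ℓ : {x : L // x ∉ F}, cellSup B (ℓ : G) f := by
        apply Summable.tsum_le_tsum _ (hsum_d.subtype _) (hfs.subtype _)
        intro ℓ
        exact cellSup_mono' B _ (hfb ℓ) hdle
    _ < ε := hF
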